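/- Let F(z) = A₁ + A₂z + A₃z² + ⋯ be a holomorphic function on the unit disc 𝔻 taking values in the open unit ball (in operator norm) of the k×k complex matrices. Then the 2k×2k block matrix [[A₁, A₂], [0, A₁]] has operator norm at most 1. -/

import Mathlib

open Complex Metric MeasureTheory intervalIntegral Real

noncomputable section

namespace Stmt18Proof

variable {g : ℂ → ℂ} {r : ℝ}

lemma hasSeries (hg : DifferentiableOn ℂ g (ball 0 1)) (h0 : 0 < r) (h1 : r < 1) :
    HasFPowerSeriesOnBall g (cauchyPowerSeries g 0 r) 0 (ENNReal.ofNNReal ⟨r, h0.le⟩) :=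
  (hg.mono (closedBall_subset_ball h1)).hasFPowerSeriesOnBall (R := ⟨r, h0.le⟩)
    (by exact_mod_cast h0)

lemma twoPiI_ne : (2 * ↑π * I : ℂ) ≠ 0 := by
  simp [Real.pi_ne_zero, I_ne_zero]

-- mean value
lemma intA (hg : DifferentiableOn ℂ g (ball 0 1)) (h0 : 0 < r) (h1 : r < 1) :
    ∫ θ in (0:ℝ)..2*π, g (circleMap 0 r θ) = 2*π*g 0 := by
  have hps := hasSeries hg h0 h1
  have h00 : g 0 = (2 * ↑π * I : ℂ)⁻¹ • ∮ z in C(0, r), (z - 0)⁻¹ • g z := by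
    have := hps.hasFPowerSeriesAt.coeff_zero (fun _ => 1)
    rw [← this, cauchyPowerSeries_apply]
    simp
  have key : (∮ z in C(0, r), (z - 0)⁻¹ • g z) = I * ∫ θ in (0:ℝ)..2*π, g (circleMap 0 r θ) := by
    rw [circleIntegral, ← intervalIntegral.integral_const_mul]
    refine intervalIntegral.integral_congr fun θ _ => ?_
    have hz : circleMap 0 r θ ≠ 0 := circleMap_ne_center h0.ne'
    simp only [deriv_circleMap, smul_eq_mul, sub_zero]
    calc (circleMap 0 r θ * I) * ((circleMap 0 r θ)⁻¹ * g (circleMap 0 r θ))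
        = (circleMap 0 r θ * (circleMap 0 r θ)⁻¹) * (I * g (circleMap 0 r θ)) := by ring
      _ = I * g (circleMap 0 r θ) := by rw [mul_inv_cancel₀ hz, one_mul]
  rw [key, smul_eq_mul] at h00
  have : (2 * ↑π * I : ℂ) * g 0 = I * ∫ θ in (0:ℝ)..2*π, g (circleMap 0 r θ) := by
    rw [h00, ← mul_assoc, mul_inv_cancel₀ twoPiI_ne, one_mul]
  apply mul_left_cancel₀ I_ne_zero
  rw [← this]; ring

-- derivative
lemma intB (hg : DifferentiableOn ℂ g (ball 0 1)) (h0 : 0 < r) (h1 : r < 1) :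
    ∫ θ in (0:ℝ)..2*π, (circleMap 0 r θ)⁻¹ * g (circleMap 0 r θ) = 2*π* deriv g 0 := by
  have hps := hasSeries hg h0 h1
  have h01 : deriv g 0 = (2 * ↑π * I : ℂ)⁻¹ • ∮ z in C(0, r), ((1:ℂ) / (z - 0)) ^ 1 • (z - 0)⁻¹ • g z := by
    rw [hps.hasFPowerSeriesAt.deriv, cauchyPowerSeries_apply]
  have key : (∮ z in C(0, r), ((1:ℂ) / (z - 0)) ^ 1 • (z - 0)⁻¹ • g z)
      = I * ∫ θ in (0:ℝ)..2*π, (circleMap 0 r θ)⁻¹ * g (circleMap 0 r θ) := by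
    rw [circleIntegral, ← intervalIntegral.integral_const_mul]
    refine intervalIntegral.integral_congr fun θ _ => ?_
    have hz : circleMap 0 r θ ≠ 0 := circleMap_ne_center h0.ne'
    simp only [deriv_circleMap, smul_eq_mul, sub_zero, pow_one, one_div]
    calc (circleMap 0 r θ * I) * ((circleMap 0 r θ)⁻¹ * ((circleMap 0 r θ)⁻¹ * g (circleMap 0 r θ)))
        = (circleMap 0 r θ * (circleMap 0 r θ)⁻¹) * (I * ((circleMap 0 r θ)⁻¹ * g (circleMap 0 r θ))) := by ring
      _ = I * ((circleMap 0 r θ)⁻¹ * g (circleMap 0 r θ)) := by rw [mul_inv_cancel₀ hz, one_mul]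
  rw [key, smul_eq_mul] at h01
  have : (2 * ↑π * I : ℂ) * deriv g 0 = I * ∫ θ in (0:ℝ)..2*π, (circleMap 0 r θ)⁻¹ * g (circleMap 0 r θ) := by
    rw [h01, ← mul_assoc, mul_inv_cancel₀ twoPiI_ne, one_mul]
  apply mul_left_cancel₀ I_ne_zero
  rw [← this]; ring

-- closed curve integral vanishes
lemma intC (hg : DifferentiableOn ℂ g (ball 0 1)) (h0 : 0 < r) (h1 : r < 1) :
    ∫ θ in (0:ℝ)..2*π, circleMap 0 r θ * g (circleMap 0 r θ) = 0 := by
  have h : (∮ z in C(0, r), g z) = 0 := by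
    apply circleIntegral_eq_zero_of_differentiable_on_off_countable h0.le Set.countable_empty
    · exact (hg.mono (closedBall_subset_ball h1)).continuousOn
    · exact fun z hz => (hg.differentiableAt (isOpen_ball.mem_nhds
        (ball_subset_ball h1.le hz.1)))
  have key : (∮ z in C(0, r), g z)
      = I * ∫ θ in (0:ℝ)..2*π, circleMap 0 r θ * g (circleMap 0 r θ) := by
    rw [circleIntegral, ← intervalIntegral.integral_const_mul]
    refine intervalIntegral.integral_congr fun θ _ => ?_
    simp only [deriv_circleMap, smul_eq_mul]; ring
  rw [h] at key
  rcases mul_eq_zero.1 key.symm with h' | h'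
  · exact absurd h' I_ne_zero
  · exact h'

lemma intNorm {k : ℕ} (x x' : EuclideanSpace ℂ (Fin k)) {r : ℝ} (h0 : 0 < r) :
    ∫ θ in (0:ℝ)..2*π, ‖circleMap 0 r θ • x + x'‖^2
      = 2*π*(r^2*‖x‖^2 + ‖x'‖^2) := by
  have hpt : ∀ θ : ℝ, ‖circleMap 0 r θ • x + x'‖^2
      = (r^2*‖x‖^2 + ‖x'‖^2)
        + 2*r*((inner ℂ x x' : ℂ).re * Real.cos θ + (inner ℂ x x' : ℂ).im * Real.sin θ) := by
    intro θ
    have h1 := norm_add_sq (𝕜 := ℂ) (circleMap 0 r θ • x) x'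
    have h2 : ‖circleMap 0 r θ • x‖ = r * ‖x‖ := by
      rw [norm_smul]
      simp [abs_of_pos h0, norm_circleMap_zero]
    have h3 : (inner ℂ (circleMap 0 r θ • x) x' : ℂ) = (starRingEnd ℂ) (circleMap 0 r θ) * inner ℂ x x' := by
      rw [inner_smul_left]
    have h4 : ((starRingEnd ℂ) (circleMap 0 r θ) * (inner ℂ x x' : ℂ)).re
        = r * ((inner ℂ x x' : ℂ).re * Real.cos θ + (inner ℂ x x' : ℂ).im * Real.sin θ) := by
      simp [circleMap, Complex.ext_iff, Complex.exp_ofReal_mul_I_re, mul_re, conj_re, conj_im]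
      ring
    rw [h1, h2, h3, RCLike.re_to_complex, h4]
    ring
  simp_rw [hpt]
  have ic : IntervalIntegrable (fun θ : ℝ => (inner ℂ x x' : ℂ).re * Real.cos θ) MeasureTheory.volume 0 (2*π) :=
    (continuous_const.mul Real.continuous_cos).intervalIntegrable _ _
  have is : IntervalIntegrable (fun θ : ℝ => (inner ℂ x x' : ℂ).im * Real.sin θ) MeasureTheory.volume 0 (2*π) :=
    (continuous_const.mul Real.continuous_sin).intervalIntegrable _ _
  rw [intervalIntegral.integral_add (intervalIntegrable_const)
      ((ic.add is).const_mul (2*r)),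
    intervalIntegral.integral_const, intervalIntegral.integral_const_mul,
    intervalIntegral.integral_add ic is,
    intervalIntegral.integral_const_mul, intervalIntegral.integral_const_mul,
    integral_cos, integral_sin]
  simp

lemma Bsum {k : ℕ} (M : Matrix (Fin k) (Fin k) ℂ) (x y : EuclideanSpace ℂ (Fin k)) :
    (inner ℂ y (Matrix.toEuclideanCLM (𝕜 := ℂ) M x) : ℂ)
      = ∑ i, ∑ j, (starRingEnd ℂ) (y i) * (M i j * x j) := by
  rw [PiLp.inner_apply]
  refine Finset.sum_congr rfl fun i _ => ?_
  have : (Matrix.toEuclideanCLM (𝕜 := ℂ) M x) i = ∑ j, M i j * x j := rfl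
  rw [RCLike.inner_apply, this, mul_comm (∑ j, M i j * x j), Finset.mul_sum]

variable {k : ℕ} {F : ℂ → Matrix (Fin k) (Fin k) ℂ}

lemma gdiff (hdiff : ∀ i j, DifferentiableOn ℂ (fun z => F z i j) (Metric.ball 0 1))
    (y x : EuclideanSpace ℂ (Fin k)) :
    DifferentiableOn ℂ (fun z => (inner ℂ y (Matrix.toEuclideanCLM (𝕜 := ℂ) (F z) x) : ℂ))
      (ball 0 1) := by
  have : (fun z => (inner ℂ y (Matrix.toEuclideanCLM (𝕜 := ℂ) (F z) x) : ℂ))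
      = fun z => ∑ i, ∑ j, (starRingEnd ℂ) (y i) * (F z i j * x j) :=
    funext fun z => Bsum (F z) x y
  rw [this]
  apply DifferentiableOn.fun_sum; intro i _
  apply DifferentiableOn.fun_sum; intro j _
  exact ((hdiff i j).mul_const _).const_mul _

lemma gderiv (hdiff : ∀ i j, DifferentiableOn ℂ (fun z => F z i j) (Metric.ball 0 1))
    {A₂ : Matrix (Fin k) (Fin k) ℂ} (hA₂ : ∀ i j, A₂ i j = deriv (fun z => F z i j) 0)
    (y x : EuclideanSpace ℂ (Fin k)) :
    deriv (fun z => (inner ℂ y (Matrix.toEuclideanCLM (𝕜 := ℂ) (F z) x) : ℂ)) 0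
      = inner ℂ y (Matrix.toEuclideanCLM (𝕜 := ℂ) A₂ x) := by
  have hmem : Metric.ball (0:ℂ) 1 ∈ nhds (0:ℂ) := isOpen_ball.mem_nhds (by simp)
  have hAt : ∀ i j, DifferentiableAt ℂ (fun z => F z i j) 0 :=
    fun i j => (hdiff i j).differentiableAt hmem
  have h1 : (fun z => (inner ℂ y (Matrix.toEuclideanCLM (𝕜 := ℂ) (F z) x) : ℂ))
      = fun z => ∑ i, ∑ j, (starRingEnd ℂ) (y i) * (F z i j * x j) :=
    funext fun z => Bsum (F z) x y
  rw [h1, Bsum]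
  rw [deriv_fun_sum (fun i _ => by
    apply DifferentiableAt.fun_sum; intro j _
    exact (((hAt i j).mul_const _).const_mul _))]
  refine Finset.sum_congr rfl fun i _ => ?_
  rw [deriv_fun_sum (fun j _ => (((hAt i j).mul_const _).const_mul _))]
  refine Finset.sum_congr rfl fun j _ => ?_
  rw [deriv_const_mul _ ((hAt i j).mul_const _), deriv_mul_const (hAt i j), hA₂ i j]

set_option maxHeartbeats 1000000 in
lemma key (hdiff : ∀ i j, DifferentiableOn ℂ (fun z => F z i j) (Metric.ball 0 1))
    (hbd : ∀ z ∈ Metric.ball (0 : ℂ) 1, ‖Matrix.toEuclideanCLM (𝕜 := ℂ) (F z)‖ < 1)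
    {A₁ A₂ : Matrix (Fin k) (Fin k) ℂ}
    (hA₁ : A₁ = F 0) (hA₂ : ∀ i j, A₂ i j = deriv (fun z => F z i j) 0)
    (x₀ x₁ y₀ y₁ : EuclideanSpace ℂ (Fin k)) {r : ℝ} (h0 : 0 < r) (h1 : r < 1) :
    ‖(r:ℂ)^2 * ((inner ℂ y₀ (Matrix.toEuclideanCLM (𝕜 := ℂ) A₁ x₀) : ℂ)
        + (inner ℂ y₀ (Matrix.toEuclideanCLM (𝕜 := ℂ) A₂ x₁) : ℂ))
      + (inner ℂ y₁ (Matrix.toEuclideanCLM (𝕜 := ℂ) A₁ x₁) : ℂ)‖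
      ≤ (‖x₀‖^2 + ‖x₁‖^2 + ‖y₀‖^2 + ‖y₁‖^2)/2 := by
  set w : ℝ → ℂ := circleMap 0 r with hw
  have hwne : ∀ θ, w θ ≠ 0 := fun θ => circleMap_ne_center h0.ne'
  have hwball : ∀ θ, w θ ∈ ball (0:ℂ) 1 := fun θ => by
    simp only [hw, mem_ball_zero_iff, norm_circleMap_zero]
    rw [abs_of_pos h0]; exact h1
  have hwnorm : ∀ θ, ‖w θ‖ = r := fun θ => by
    simp only [hw, norm_circleMap_zero]; exact abs_of_pos h0
  have hwcont : Continuous w := continuous_circleMap 0 r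
  set g : EuclideanSpace ℂ (Fin k) → EuclideanSpace ℂ (Fin k) → ℂ → ℂ :=
    fun y x z => (inner ℂ y (Matrix.toEuclideanCLM (𝕜 := ℂ) (F z) x) : ℂ) with hg
  have hgd : ∀ y x, DifferentiableOn ℂ (g y x) (ball 0 1) := fun y x => gdiff hdiff y x
  have hgc : ∀ y x, Continuous (fun θ => g y x (w θ)) := fun y x =>
    ((hgd y x).continuousOn.comp_continuous hwcont hwball)
  -- pointwise identity
  have hpt : ∀ θ : ℝ, (inner ℂ (w θ • y₀ + y₁)
        (Matrix.toEuclideanCLM (𝕜 := ℂ) (F (w θ)) (w θ • x₀ + x₁)) : ℂ)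
      = (r:ℂ)^2 * g y₀ x₀ (w θ) + (r:ℂ)^2 * ((w θ)⁻¹ * g y₀ x₁ (w θ))
        + w θ * g y₁ x₀ (w θ) + g y₁ x₁ (w θ) := by
    intro θ
    have hcc : (starRingEnd ℂ) (w θ) * w θ = (r:ℂ)^2 := by
      rw [mul_comm, Complex.mul_conj']
      norm_cast
      rw [hwnorm θ]
    have hc : (starRingEnd ℂ) (w θ) = (r:ℂ)^2 * (w θ)⁻¹ := by
      rw [← hcc, mul_assoc, mul_inv_cancel₀ (hwne θ), mul_one]
    simp only [hg, ContinuousLinearMap.map_add, ContinuousLinearMap.map_smul, inner_add_left, inner_add_right,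
      inner_smul_left, inner_smul_right, smul_eq_mul]
    linear_combination (inner ℂ y₀ ((Matrix.toEuclideanCLM (𝕜 := ℂ) (F (w θ))) x₀) : ℂ) * hcc
      + (inner ℂ y₀ ((Matrix.toEuclideanCLM (𝕜 := ℂ) (F (w θ))) x₁) : ℂ) * hc
  -- integrability
  have i1 : IntervalIntegrable (fun θ => g y₀ x₀ (w θ)) volume 0 (2*π) :=
    (hgc y₀ x₀).intervalIntegrable _ _
  have i2 : IntervalIntegrable (fun θ => (w θ)⁻¹ * g y₀ x₁ (w θ)) volume 0 (2*π) :=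
    ((hwcont.inv₀ hwne).mul (hgc y₀ x₁)).intervalIntegrable _ _
  have i3 : IntervalIntegrable (fun θ => w θ * g y₁ x₀ (w θ)) volume 0 (2*π) :=
    (hwcont.mul (hgc y₁ x₀)).intervalIntegrable _ _
  have i4 : IntervalIntegrable (fun θ => g y₁ x₁ (w θ)) volume 0 (2*π) :=
    (hgc y₁ x₁).intervalIntegrable _ _
  set S : ℂ := (r:ℂ)^2 * ((inner ℂ y₀ (Matrix.toEuclideanCLM (𝕜 := ℂ) A₁ x₀) : ℂ)
        + (inner ℂ y₀ (Matrix.toEuclideanCLM (𝕜 := ℂ) A₂ x₁) : ℂ))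
      + (inner ℂ y₁ (Matrix.toEuclideanCLM (𝕜 := ℂ) A₁ x₁) : ℂ) with hS
  have hg0 : ∀ y x, g y x 0 = (inner ℂ y (Matrix.toEuclideanCLM (𝕜 := ℂ) A₁ x) : ℂ) := by
    intro y x; rw [hg]; simp only [← hA₁]
  have hint : ∫ θ in (0:ℝ)..2*π, (inner ℂ (w θ • y₀ + y₁)
        (Matrix.toEuclideanCLM (𝕜 := ℂ) (F (w θ)) (w θ • x₀ + x₁)) : ℂ) = 2*π*S := by
    calc ∫ θ in (0:ℝ)..2*π, (inner ℂ (w θ • y₀ + y₁)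
          (Matrix.toEuclideanCLM (𝕜 := ℂ) (F (w θ)) (w θ • x₀ + x₁)) : ℂ)
        = ∫ θ in (0:ℝ)..2*π, ((r:ℂ)^2 * g y₀ x₀ (w θ) + (r:ℂ)^2 * ((w θ)⁻¹ * g y₀ x₁ (w θ))
            + w θ * g y₁ x₀ (w θ) + g y₁ x₁ (w θ)) :=
          intervalIntegral.integral_congr fun θ _ => hpt θ
      _ = 2*π*S := by
          rw [intervalIntegral.integral_add (((i1.const_mul _).add (i2.const_mul _)).add i3) i4,
            intervalIntegral.integral_add ((i1.const_mul _).add (i2.const_mul _)) i3,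
            intervalIntegral.integral_add (i1.const_mul _) (i2.const_mul _),
            intervalIntegral.integral_const_mul, intervalIntegral.integral_const_mul,
            intA (hgd y₀ x₀) h0 h1, intB (hgd y₀ x₁) h0 h1, intC (hgd y₁ x₀) h0 h1,
            intA (hgd y₁ x₁) h0 h1, gderiv hdiff hA₂ y₀ x₁, hg0, hg0, hS]
          ring
  -- bound
  have hb : ‖∫ θ in (0:ℝ)..2*π, (inner ℂ (w θ • y₀ + y₁)
        (Matrix.toEuclideanCLM (𝕜 := ℂ) (F (w θ)) (w θ • x₀ + x₁)) : ℂ)‖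
      ≤ |∫ θ in (0:ℝ)..2*π, (‖w θ • x₀ + x₁‖^2 + ‖w θ • y₀ + y₁‖^2)/2| := by
    refine le_trans (intervalIntegral.norm_integral_le_of_norm_le (by positivity) ?_ ?_) (le_abs_self _)
    · refine Filter.Eventually.of_forall fun θ _ => ?_
      set P := w θ • x₀ + x₁
      set Q := w θ • y₀ + y₁
      have h5 := norm_inner_le_norm (𝕜 := ℂ) Q (Matrix.toEuclideanCLM (𝕜 := ℂ) (F (w θ)) P)
      have h6 := (Matrix.toEuclideanCLM (𝕜 := ℂ) (F (w θ))).le_opNorm P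
      have h7 := (hbd (w θ) (hwball θ)).le
      have h8 : (0:ℝ) ≤ ‖P‖ := norm_nonneg _
      have h9 : (0:ℝ) ≤ ‖Q‖ := norm_nonneg _
      have h10 : (0:ℝ) ≤ ‖Matrix.toEuclideanCLM (𝕜 := ℂ) (F (w θ)) P‖ := norm_nonneg _
      have h11 : ‖Matrix.toEuclideanCLM (𝕜 := ℂ) (F (w θ))‖ * ‖P‖ ≤ 1 * ‖P‖ :=
        mul_le_mul_of_nonneg_right h7 h8
      have h12 : ‖Q‖ * (‖Matrix.toEuclideanCLM (𝕜 := ℂ) (F (w θ))‖ * ‖P‖) ≤ ‖Q‖ * (1 * ‖P‖) :=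
        mul_le_mul_of_nonneg_left h11 h9
      have h13 : ‖Q‖ * ‖(Matrix.toEuclideanCLM (𝕜 := ℂ) (F (w θ))) P‖
          ≤ ‖Q‖ * (‖Matrix.toEuclideanCLM (𝕜 := ℂ) (F (w θ))‖ * ‖P‖) :=
        mul_le_mul_of_nonneg_left h6 h9
      nlinarith [sq_nonneg (‖P‖ - ‖Q‖)]
    · exact (((((hwcont.smul continuous_const).add continuous_const).norm.pow 2).add
        ((((hwcont.smul continuous_const).add continuous_const).norm.pow 2))).div_const 2).intervalIntegrable _ _
  have hval : ∫ θ in (0:ℝ)..2*π, (‖w θ • x₀ + x₁‖^2 + ‖w θ • y₀ + y₁‖^2)/2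
      = π*(r^2*‖x₀‖^2 + ‖x₁‖^2) + π*(r^2*‖y₀‖^2 + ‖y₁‖^2) := by
    have j1 : IntervalIntegrable (fun θ => ‖w θ • x₀ + x₁‖^2) volume 0 (2*π) :=
      ((((hwcont.smul continuous_const).add continuous_const).norm.pow 2)).intervalIntegrable _ _
    have j2 : IntervalIntegrable (fun θ => ‖w θ • y₀ + y₁‖^2) volume 0 (2*π) :=
      ((((hwcont.smul continuous_const).add continuous_const).norm.pow 2)).intervalIntegrable _ _
    simp_rw [add_div]
    rw [intervalIntegral.integral_add (j1.div_const 2) (j2.div_const 2),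
      intervalIntegral.integral_div, intervalIntegral.integral_div,
      intNorm x₀ x₁ h0, intNorm y₀ y₁ h0]
    ring
  rw [hint] at hb
  rw [hval] at hb
  have hnorm2pi : ‖(2*(π:ℂ)*S)‖ = 2*π*‖S‖ := by
    rw [norm_mul, norm_mul]
    simp [Real.pi_pos.le, abs_of_pos Real.pi_pos]
  rw [hnorm2pi] at hb
  have habs : |π*(r^2*‖x₀‖^2 + ‖x₁‖^2) + π*(r^2*‖y₀‖^2 + ‖y₁‖^2)|
      = π*(r^2*‖x₀‖^2 + ‖x₁‖^2) + π*(r^2*‖y₀‖^2 + ‖y₁‖^2) := by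
    apply _root_.abs_of_nonneg
    have := Real.pi_pos.le
    positivity
  rw [habs] at hb
  have hr1 : r^2 ≤ 1 := by nlinarith
  have hx0 : (0:ℝ) ≤ ‖x₀‖^2 := sq_nonneg _
  have hy0 : (0:ℝ) ≤ ‖y₀‖^2 := sq_nonneg _
  have h14 : r^2*‖x₀‖^2 ≤ ‖x₀‖^2 := by nlinarith
  have h15 : r^2*‖y₀‖^2 ≤ ‖y₀‖^2 := by nlinarith
  have h16 : (2*π)*‖S‖ ≤ (2*π)*((‖x₀‖^2 + ‖x₁‖^2 + ‖y₀‖^2 + ‖y₁‖^2)/2) := by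
    have c1 := mul_le_mul_of_nonneg_left h14 Real.pi_pos.le
    have c2 := mul_le_mul_of_nonneg_left h15 Real.pi_pos.le
    have e1 : π*(r^2*‖x₀‖^2 + ‖x₁‖^2) = π*(r^2*‖x₀‖^2) + π*‖x₁‖^2 := by ring
    have e2 : π*(r^2*‖y₀‖^2 + ‖y₁‖^2) = π*(r^2*‖y₀‖^2) + π*‖y₁‖^2 := by ring
    have e3 : (2*π)*((‖x₀‖^2 + ‖x₁‖^2 + ‖y₀‖^2 + ‖y₁‖^2)/2)
        = π*‖x₀‖^2 + π*‖x₁‖^2 + π*‖y₀‖^2 + π*‖y₁‖^2 := by ring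
    rw [e3]; rw [e1, e2] at hb; linarith
  exact le_of_mul_le_mul_left h16 (by positivity)

lemma limit_r {a b : ℂ} {C : ℝ}
    (h : ∀ r : ℝ, 0 < r → r < 1 → ‖(r:ℂ)^2 * a + b‖ ≤ C) : ‖a + b‖ ≤ C := by
  have hne : Filter.NeBot (nhdsWithin (1:ℝ) (Set.Ioo 0 1)) :=
    right_nhdsWithin_Ioo_neBot (by norm_num)
  have hf : Continuous (fun r : ℝ => ‖(r:ℂ)^2 * a + b‖) :=
    (((Complex.continuous_ofReal.pow 2).mul continuous_const).add continuous_const).norm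
  have ht : Filter.Tendsto (fun r : ℝ => ‖(r:ℂ)^2 * a + b‖)
      (nhdsWithin (1:ℝ) (Set.Ioo 0 1)) (nhds ‖a + b‖) := by
    have := (hf.tendsto 1).mono_left (nhdsWithin_le_nhds (s := Set.Ioo 0 1))
    simpa using this
  refine le_of_tendsto ht ?_
  exact Filter.eventually_of_mem self_mem_nhdsWithin fun r hr => h r hr.1 hr.2

lemma Bsum2 {k : ℕ} (M : Matrix (Fin k ⊕ Fin k) (Fin k ⊕ Fin k) ℂ)
    (x y : EuclideanSpace ℂ (Fin k ⊕ Fin k)) :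
    (inner ℂ y (Matrix.toEuclideanCLM (𝕜 := ℂ) M x) : ℂ)
      = ∑ i, ∑ j, (starRingEnd ℂ) (y i) * (M i j * x j) := by
  rw [PiLp.inner_apply]
  refine Finset.sum_congr rfl fun i _ => ?_
  have : (Matrix.toEuclideanCLM (𝕜 := ℂ) M x) i = ∑ j, M i j * x j := rfl
  rw [RCLike.inner_apply, this, mul_comm (∑ j, M i j * x j), Finset.mul_sum]

def splitL {k : ℕ} (u : EuclideanSpace ℂ (Fin k ⊕ Fin k)) : EuclideanSpace ℂ (Fin k) :=
  WithLp.toLp 2 (fun i => u (Sum.inl i))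
def splitR {k : ℕ} (u : EuclideanSpace ℂ (Fin k ⊕ Fin k)) : EuclideanSpace ℂ (Fin k) :=
  WithLp.toLp 2 (fun i => u (Sum.inr i))

-- block decomposition of the sesquilinear form
lemma block_inner {k : ℕ} (A₁ A₂ : Matrix (Fin k) (Fin k) ℂ)
    (v u : EuclideanSpace ℂ (Fin k ⊕ Fin k)) :
    (inner ℂ u (Matrix.toEuclideanCLM (𝕜 := ℂ) (Matrix.fromBlocks A₁ A₂ 0 A₁) v) : ℂ)
      = (inner ℂ (splitL u) (Matrix.toEuclideanCLM (𝕜 := ℂ) A₁ (splitL v)) : ℂ)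
        + (inner ℂ (splitL u) (Matrix.toEuclideanCLM (𝕜 := ℂ) A₂ (splitR v)) : ℂ)
        + (inner ℂ (splitR u) (Matrix.toEuclideanCLM (𝕜 := ℂ) A₁ (splitR v)) : ℂ) := by
  rw [Bsum2, Bsum, Bsum, Bsum]
  rw [Fintype.sum_sum_type]
  simp only [Fintype.sum_sum_type, Matrix.fromBlocks_apply₁₁, Matrix.fromBlocks_apply₁₂,
    Matrix.fromBlocks_apply₂₁, Matrix.fromBlocks_apply₂₂, Matrix.zero_apply, zero_mul, mul_zero,
    Finset.sum_const_zero, add_zero, zero_add, Finset.sum_add_distrib]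
  rfl

lemma norm_split {k : ℕ} (u : EuclideanSpace ℂ (Fin k ⊕ Fin k)) :
    ‖u‖^2 = ‖splitL u‖^2 + ‖splitR u‖^2 := by
  rw [EuclideanSpace.norm_eq, EuclideanSpace.norm_eq, EuclideanSpace.norm_eq,
    Real.sq_sqrt (by positivity), Real.sq_sqrt (by positivity), Real.sq_sqrt (by positivity)]
  exact Fintype.sum_sum_type _

end Stmt18Proof

open Stmt18Proof in
/-- If `F(z) = A₁ + A₂ z + ⋯` is holomorphic on the unit disc with values in the open unit
ball of `M_k(ℂ)` (operator norm), then `‖[[A₁, A₂], [0, A₁]]‖ ≤ 1`. -/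
theorem stmt18 (k : ℕ) (F : ℂ → Matrix (Fin k) (Fin k) ℂ)
    (hdiff : ∀ i j, DifferentiableOn ℂ (fun z => F z i j) (Metric.ball 0 1))
    (hbd : ∀ z ∈ Metric.ball (0 : ℂ) 1, ‖Matrix.toEuclideanCLM (𝕜 := ℂ) (F z)‖ < 1)
    (A₁ A₂ : Matrix (Fin k) (Fin k) ℂ)
    (hA₁ : A₁ = F 0) (hA₂ : ∀ i j, A₂ i j = deriv (fun z => F z i j) 0) :
    ‖Matrix.toEuclideanCLM (𝕜 := ℂ) (Matrix.fromBlocks A₁ A₂ 0 A₁)‖ ≤ 1 := by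
  have hkey1 : ∀ x₀ x₁ y₀ y₁ : EuclideanSpace ℂ (Fin k),
      ‖(inner ℂ y₀ (Matrix.toEuclideanCLM (𝕜 := ℂ) A₁ x₀) : ℂ)
          + (inner ℂ y₀ (Matrix.toEuclideanCLM (𝕜 := ℂ) A₂ x₁) : ℂ)
          + (inner ℂ y₁ (Matrix.toEuclideanCLM (𝕜 := ℂ) A₁ x₁) : ℂ)‖
        ≤ (‖x₀‖^2 + ‖x₁‖^2 + ‖y₀‖^2 + ‖y₁‖^2)/2 := by
    intro x₀ x₁ y₀ y₁
    apply limit_r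
    intro r h0 h1
    exact key hdiff hbd hA₁ hA₂ x₀ x₁ y₀ y₁ h0 h1
  apply ContinuousLinearMap.opNorm_le_bound _ zero_le_one
  intro v
  rw [one_mul]
  set u := Matrix.toEuclideanCLM (𝕜 := ℂ) (Matrix.fromBlocks A₁ A₂ 0 A₁) v with hu
  have h2 : (inner ℂ u u : ℂ) = ((‖u‖:ℝ) : ℂ)^2 := inner_self_eq_norm_sq_to_K u
  have h3 : (inner ℂ u u : ℂ)
      = (inner ℂ (splitL u) (Matrix.toEuclideanCLM (𝕜 := ℂ) A₁ (splitL v)) : ℂ)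
        + (inner ℂ (splitL u) (Matrix.toEuclideanCLM (𝕜 := ℂ) A₂ (splitR v)) : ℂ)
        + (inner ℂ (splitR u) (Matrix.toEuclideanCLM (𝕜 := ℂ) A₁ (splitR v)) : ℂ) :=
    block_inner A₁ A₂ v u
  have h5 : ‖(inner ℂ u u : ℂ)‖ = ‖u‖^2 := by
    rw [h2, norm_pow]
    simp
  have h4 : ‖u‖^2 ≤ (‖v‖^2 + ‖u‖^2)/2 := by
    calc ‖u‖^2 = ‖(inner ℂ u u : ℂ)‖ := h5.symm
      _ ≤ (‖splitL v‖^2 + ‖splitR v‖^2 + ‖splitL u‖^2 + ‖splitR u‖^2)/2 := by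
          rw [h3]; exact hkey1 _ _ _ _
      _ = (‖v‖^2 + ‖u‖^2)/2 := by rw [norm_split u, norm_split v]; ring
  nlinarith [norm_nonneg u, norm_nonneg v]
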